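/- For an elementary block B_i of a Boolean network: if there is a path from state s_i to state s'_i in the local transition system of B_i, then there is a path from s to s' in the global transition system, where s and s' project to s_i and s'_i on B_i and agree (with each other) on all nodes outside B_i. -/

import Mathlib

/-- Reachability: reflexive-transitive closure of the transition relation. -/
def reach {σ : Type*} (r : σ → σ → Prop) : σ → σ → Prop := Relation.ReflTransGen r

/-- An attractor: a set `A` with `reach(s) = A` for every `s ∈ A`. -/
def IsAttractor {σ : Type*} (r : σ → σ → Prop) (A : Set σ) : Prop :=
  ∀ s ∈ A, {t | reach r s t} = A

/-- Weak basin of attraction. -/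
def basW {σ : Type*} (r : σ → σ → Prop) (A : Set σ) : Set σ :=
  {s | ∃ t ∈ A, reach r s t}

/-- Strong basin of attraction. -/
def basS {σ : Type*} (r : σ → σ → Prop) (A : Set σ) : Set σ :=
  basW r A \ ⋃ A' ∈ {B : Set σ | IsAttractor r B ∧ B ≠ A}, basW r A'

variable {V : Type*} [Fintype V] [DecidableEq V]
open Classical

/-- Asynchronous (global) transition relation of a Boolean network on node set `V`. -/
def gstep (f : (V → Bool) → V → Bool) (s s' : V → Bool) : Prop :=
  ∃ v, s' = Function.update s v (f s v)

/-- A block `B` is elementary if the update function of every node of `B`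
depends only on the nodes in `B`. -/
def Elem (f : (V → Bool) → V → Bool) (B : Set V) : Prop :=
  ∀ v ∈ B, ∀ s t : V → Bool, (∀ u ∈ B, s u = t u) → f s v = f t v

/-- Projection of a global state to a block. -/
def proj (B : Set V) (s : V → Bool) : {v // v ∈ B} → Bool := fun v => s v.1

/-- Local (asynchronous) transition relation of a block `B`: a node of `B` is updated,
using any global state extending the local one (for elementary `B` this is well defined). -/
def lstep (f : (V → Bool) → V → Bool) (B : Set V)
    (x x' : {v // v ∈ B} → Bool) : Prop :=
  ∃ v : {v // v ∈ B}, ∃ s : V → Bool, proj B s = x ∧ x' = Function.update x v (f s v.1)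

/-- For an elementary block `B`: a local path from `x` to `x'` in `TS_B` lifts to a global path
from `s` to `s'` where `s,s'` project to `x,x'` on `B` and agree with each other outside `B`. -/
noncomputable def extB {V : Type*} (B : Set V) (x : {v // v ∈ B} → Bool) : V → Bool :=
  fun v => if h : v ∈ B then x ⟨v, h⟩ else false

lemma proj_extB {V : Type*} (B : Set V) (x : {v // v ∈ B} → Bool) :
    proj B (extB B x) = x := by
  funext v; simp [proj, extB, v.2]

lemma extB_update {V : Type*} [DecidableEq V] (B : Set V) (x : {v // v ∈ B} → Bool)
    (v : {v // v ∈ B}) (b : Bool) :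
    extB B (Function.update x v b) = Function.update (extB B x) v.1 b := by
  funext u
  by_cases hu : u ∈ B
  · by_cases huv : u = v.1
    · subst huv
      simp [extB, hu, Function.update, Subtype.ext_iff]
    · have : (⟨u, hu⟩ : {v // v ∈ B}) ≠ v := fun h => huv (congrArg Subtype.val h)
      simp [extB, hu, Function.update_of_ne huv, Function.update_of_ne this]
  · have : u ≠ v.1 := fun h => hu (h ▸ v.2)
    simp [extB, hu, Function.update_of_ne this]

lemma lstep_lift {V : Type*} [DecidableEq V] (f : (V → Bool) → V → Bool) (B : Set V)
    (hB : Elem f B) {x x' : {v // v ∈ B} → Bool} (h : lstep f B x x') :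
    gstep f (extB B x) (extB B x') := by
  obtain ⟨v, s, hs, hx'⟩ := h
  refine ⟨v.1, ?_⟩
  have hf : f s v.1 = f (extB B x) v.1 := by
    apply hB v.1 v.2
    intro u hu
    have := congrFun hs ⟨u, hu⟩
    simp [proj] at this
    simp [extB, hu, this]
  rw [hx', extB_update, hf]

theorem stmt10 (f : (V → Bool) → V → Bool) (B : Set V) (hB : Elem f B)
    (x x' : {v // v ∈ B} → Bool)
    (hpath : Relation.ReflTransGen (lstep f B) x x') :
    ∃ s s' : V → Bool, Relation.ReflTransGen (gstep f) s s' ∧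
      proj B s = x ∧ proj B s' = x' ∧ ∀ v ∉ B, s v = s' v := by
  refine ⟨extB B x, extB B x', ?_, proj_extB B x, proj_extB B x', ?_⟩
  · exact Relation.ReflTransGen.lift (extB B) (fun a b h => lstep_lift f B hB h) x x' hpath
  · intro v hv; simp [extB, hv]
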